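/- Let μ, ν be Borel probability measures on ℝ. Then the Lévy distance satisfies d_L(μ, ν) ≤ 2·(sup{ |∫ f dμ − ∫ f dν| : ‖f‖_∞ + Lip(f) ≤ 1 })^{1/2}, where the supremum runs over bounded Lipschitz functions f: ℝ → ℝ. -/

import Mathlib

open MeasureTheory NNReal

lemma key_step (μ ν : Measure ℝ) [IsProbabilityMeasure μ] [IsProbabilityMeasure ν]
    (D : ℝ) (hD : 0 ≤ D)
    (hBL : ∀ (f : ℝ → ℝ) (c : ℝ) (L : ℝ≥0), (∀ x, |f x| ≤ c) → LipschitzWith L f →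
      c + (L : ℝ) ≤ 1 → |(∫ x, f x ∂μ) - ∫ x, f x ∂ν| ≤ D)
    (ε : ℝ) (hε : 2 * Real.sqrt D < ε) (O : Set ℝ) (hO : IsOpen O) :
    μ O ≤ ν (Metric.thickening ε O) + ENNReal.ofReal ε := by
  have hε0 : 0 < ε := lt_of_le_of_lt (by positivity) hε
  rcases le_or_gt 1 ε with h1 | h1
  · calc μ O ≤ 1 := prob_le_one
      _ ≤ ENNReal.ofReal ε := by
          rw [← ENNReal.ofReal_one]; exact ENNReal.ofReal_le_ofReal h1
      _ ≤ _ := le_add_self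
  rcases O.eq_empty_or_nonempty with rfl | hOne
  · simp
  -- D < ε^2 / 4
  have hDlt : D < ε ^ 2 / 4 := by
    have h : Real.sqrt D < ε / 2 := by linarith
    have := Real.sq_sqrt hD
    nlinarith [Real.sqrt_nonneg D]
  set t : ℝ := ε / 2 with ht
  have ht0 : 0 < t := by positivity
  set f : ℝ → ℝ := fun x => max (ε - Metric.infDist x O) 0 / 2 with hf
  have hfnn : ∀ x, 0 ≤ f x := fun x => by positivity
  have hfle : ∀ x, f x ≤ t := by
    intro x
    have : max (ε - Metric.infDist x O) 0 ≤ ε :=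
      max_le (by have := Metric.infDist_nonneg (s := O) (x := x); linarith) hε0.le
    simp only [hf, ht]; linarith
  have hfbd : ∀ x, |f x| ≤ t := fun x => by
    rw [abs_of_nonneg (hfnn x)]; exact hfle x
  have hLip : LipschitzWith (1/2 : ℝ≥0) f := by
    apply LipschitzWith.of_dist_le_mul
    intro x y
    have h1 := (Metric.lipschitz_infDist_pt O).dist_le_mul x y
    simp only [Real.dist_eq, one_mul] at h1 ⊢
    have h2 : |max (ε - Metric.infDist x O) 0 - max (ε - Metric.infDist y O) 0|
        ≤ |(ε - Metric.infDist x O) - (ε - Metric.infDist y O)| :=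
      abs_max_sub_max_le_abs _ _ _
    have h3 : (ε - Metric.infDist x O) - (ε - Metric.infDist y O)
        = Metric.infDist y O - Metric.infDist x O := by ring
    rw [h3] at h2
    have h4 : |Metric.infDist y O - Metric.infDist x O|
        = |Metric.infDist x O - Metric.infDist y O| := abs_sub_comm _ _
    rw [h4] at h2
    have : f x - f y = (max (ε - Metric.infDist x O) 0 - max (ε - Metric.infDist y O) 0) / 2 := by
      simp [hf]; ring
    rw [this, abs_div]
    simp only [abs_two]
    push_cast
    push_cast at h1
    linarith
  have hcont : Continuous f := hLip.continuous
  have hint : ∀ (κ : Measure ℝ) [IsProbabilityMeasure κ], Integrable f κ := by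
    intro κ _
    exact (integrable_const t).mono' hcont.aestronglyMeasurable
      (Filter.Eventually.of_forall fun x => by simpa [Real.norm_eq_abs] using hfbd x)
  -- f = t on O
  have hfO : ∀ x ∈ O, f x = t := by
    intro x hx
    simp [hf, ht, Metric.infDist_zero_of_mem hx, max_eq_left hε0.le]
  -- f = 0 outside thickening
  have hfT : ∀ x, x ∉ Metric.thickening ε O → f x = 0 := by
    intro x hx
    have : ¬ Metric.infDist x O < ε := fun h =>
      hx ((Metric.mem_thickening_iff_infDist_lt hOne).2 h)
    simp [hf, max_eq_right (by linarith : ε - Metric.infDist x O ≤ 0)]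
  set T := Metric.thickening ε O with hT
  have hTmeas : MeasurableSet T := Metric.isOpen_thickening.measurableSet
  -- lower bound on ∫ f dμ
  have hlow : t * (μ O).toReal ≤ ∫ x, f x ∂μ := by
    have hind : ∀ x, O.indicator (fun _ => t) x ≤ f x := by
      intro x
      by_cases hx : x ∈ O
      · rw [Set.indicator_of_mem hx, hfO x hx]
      · rw [Set.indicator_of_notMem hx]; exact hfnn x
    calc t * (μ O).toReal = ∫ x, O.indicator (fun _ => t) x ∂μ := by
          rw [integral_indicator_const _ hO.measurableSet]; simp [mul_comm, Measure.real]
      _ ≤ ∫ x, f x ∂μ :=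
          integral_mono ((integrable_const t).indicator hO.measurableSet) (hint μ) hind
  -- upper bound on ∫ f dν
  have hup : ∫ x, f x ∂ν ≤ t * (ν T).toReal := by
    have hind : ∀ x, f x ≤ T.indicator (fun _ => t) x := by
      intro x
      by_cases hx : x ∈ T
      · rw [Set.indicator_of_mem hx]; exact hfle x
      · rw [Set.indicator_of_notMem hx, hfT x hx]
    calc ∫ x, f x ∂ν ≤ ∫ x, T.indicator (fun _ => t) x ∂ν :=
          integral_mono (hint ν) ((integrable_const t).indicator hTmeas) hind
      _ = t * (ν T).toReal := by
          rw [integral_indicator_const _ hTmeas]; simp [mul_comm, Measure.real]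
  have hBLf := hBL f t (1/2) hfbd hLip (by push_cast; simp only [ht]; linarith)
  have habs : (∫ x, f x ∂μ) - ∫ x, f x ∂ν ≤ D := le_trans (le_abs_self _) hBLf
  have hmain : t * (μ O).toReal ≤ t * (ν T).toReal + D := by linarith
  have hDt : D / t ≤ ε := by
    rw [div_le_iff₀ ht0]
    nlinarith
  have hreal : (μ O).toReal ≤ (ν T).toReal + ε := by
    have hd : D / t * t = D := div_mul_cancel₀ D ht0.ne'
    have : (μ O).toReal ≤ (ν T).toReal + D / t := by nlinarith [hmain, hd, ht0]
    linarith
  have hμfin : μ O ≠ ⊤ := measure_ne_top μ O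
  have hνfin : ν T ≠ ⊤ := measure_ne_top ν T
  calc μ O = ENNReal.ofReal (μ O).toReal := (ENNReal.ofReal_toReal hμfin).symm
    _ ≤ ENNReal.ofReal ((ν T).toReal + ε) := ENNReal.ofReal_le_ofReal hreal
    _ ≤ ENNReal.ofReal (ν T).toReal + ENNReal.ofReal ε := ENNReal.ofReal_add_le
    _ = ν T + ENNReal.ofReal ε := by rw [ENNReal.ofReal_toReal hνfin]

open MeasureTheory NNReal in
theorem levy_le_sqrt_bl (μ ν : Measure ℝ) [IsProbabilityMeasure μ] [IsProbabilityMeasure ν]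
    (D : ℝ) (hD : 0 ≤ D)
    (hBL : ∀ (f : ℝ → ℝ) (c : ℝ) (L : ℝ≥0), (∀ x, |f x| ≤ c) → LipschitzWith L f →
      c + (L : ℝ) ≤ 1 → |(∫ x, f x ∂μ) - ∫ x, f x ∂ν| ≤ D) :
    ∀ ε : ℝ, 2 * Real.sqrt D < ε → ∀ O : Set ℝ, IsOpen O →
      μ O ≤ ν (Metric.thickening ε O) + ENNReal.ofReal ε ∧
      ν O ≤ μ (Metric.thickening ε O) + ENNReal.ofReal ε := by
  intro ε hε O hO
  have hBL' : ∀ (f : ℝ → ℝ) (c : ℝ) (L : ℝ≥0), (∀ x, |f x| ≤ c) → LipschitzWith L f →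
      c + (L : ℝ) ≤ 1 → |(∫ x, f x ∂ν) - ∫ x, f x ∂μ| ≤ D := by
    intro f c L h1 h2 h3
    rw [abs_sub_comm]; exact hBL f c L h1 h2 h3
  exact ⟨key_step μ ν D hD hBL ε hε O hO, key_step ν μ D hD hBL' ε hε O hO⟩
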